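/- Let H_0 be a positive semidefinite Hermitian operator on a finite-dimensional complex inner product space whose kernel is one-dimensional, and whose smallest non-zero eigenvalue is strictly larger than 1. Let V be a Hermitian operator and Δ > 0 with ‖V‖ ≤ Δ/2. Then the Hermitian operator H = Δ H_0 + V has exactly one eigenvalue (counted with multiplicity) in the interval [−Δ/2, Δ/2]. -/

import Mathlib

open scoped InnerProductSpace ComplexOrder

/-- Eigenvalues of a Hermitian matrix, listed in non-decreasing order with multiplicity
(junk value `0` for non-Hermitian matrices). -/
noncomputable def eigs {N : ℕ} (A : Matrix (Fin N) (Fin N) ℂ) : Fin N → ℝ :=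
  if hA : A.IsHermitian then hA.eigenvalues ∘ Tuple.sort hA.eigenvalues else 0

/-- The operator norm of a matrix, acting on Euclidean space. -/
noncomputable def opNorm {N : ℕ} (A : Matrix (Fin N) (Fin N) ℂ) : ℝ :=
  ‖Matrix.toEuclideanCLM (𝕜 := ℂ) (n := Fin N) A‖

/-- if `H_0 ⪰ 0` has one-dimensional kernel and smallest non-zero
eigenvalue `> 1`, `V` is Hermitian with `‖V‖ ≤ Δ/2` and `Δ > 0`, then
`H = Δ H_0 + V` has exactly one eigenvalue (with multiplicity) in `[−Δ/2, Δ/2]`. -/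
lemma clm_eigen {N : ℕ} {A : Matrix (Fin N) (Fin N) ℂ} (hA : A.IsHermitian) (i : Fin N) :
    Matrix.toEuclideanCLM (𝕜 := ℂ) A (hA.eigenvectorBasis i)
      = (hA.eigenvalues i : ℂ) • hA.eigenvectorBasis i := by
  have key : Matrix.toEuclideanCLM (𝕜 := ℂ) A (hA.eigenvectorBasis i)
      = (WithLp.equiv 2 _).symm (A.mulVec (WithLp.equiv 2 _ (hA.eigenvectorBasis i))) :=
    rfl
  rw [key]
  apply (WithLp.equiv 2 _).injective
  simp only [Equiv.apply_symm_apply]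
  have h := hA.mulVec_eigenvectorBasis i
  ext j
  simpa using congrFun h j

lemma rayleigh_expand {N : ℕ} {A : Matrix (Fin N) (Fin N) ℂ} (hA : A.IsHermitian)
    (x : EuclideanSpace ℂ (Fin N)) :
    ⟪x, Matrix.toEuclideanCLM (𝕜 := ℂ) A x⟫_ℂ
      = ∑ i, ((hA.eigenvalues i * ‖⟪(hA.eigenvectorBasis i : EuclideanSpace ℂ (Fin N)), x⟫_ℂ‖ ^ 2 : ℝ) : ℂ) := by
  set b := hA.eigenvectorBasis
  rw [← b.sum_inner_mul_inner x (Matrix.toEuclideanCLM (𝕜 := ℂ) A x)]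
  apply Finset.sum_congr rfl
  intro i _
  have hsym : ⟪(b i : EuclideanSpace ℂ (Fin N)), Matrix.toEuclideanCLM (𝕜 := ℂ) A x⟫_ℂ
      = (hA.eigenvalues i : ℂ) * ⟪(b i : EuclideanSpace ℂ (Fin N)), x⟫_ℂ := by
    have hs := (Matrix.isHermitian_iff_isSymmetric.1 hA)
    have h1 : ⟪(b i : EuclideanSpace ℂ (Fin N)), Matrix.toEuclideanCLM (𝕜 := ℂ) A x⟫_ℂ
        = ⟪Matrix.toEuclideanCLM (𝕜 := ℂ) A (b i), x⟫_ℂ := by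
      have := hs (b i) x
      rw [← Matrix.coe_toEuclideanCLM_eq_toEuclideanLin] at this
      exact this.symm
    rw [h1, clm_eigen hA i, inner_smul_left]
    simp
    exact Or.inl rfl
  rw [hsym]
  have : ⟪x, (b i : EuclideanSpace ℂ (Fin N))⟫_ℂ = starRingEnd ℂ ⟪(b i : EuclideanSpace ℂ (Fin N)), x⟫_ℂ :=
    (inner_conj_symm _ _).symm
  rw [this, mul_comm ((hA.eigenvalues i : ℂ)) ⟪(b i : EuclideanSpace ℂ (Fin N)), x⟫_ℂ,
    ← mul_assoc, RCLike.conj_mul]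
  push_cast
  rw [mul_comm]
  rfl

lemma norm_expand {N : ℕ} (b : OrthonormalBasis (Fin N) ℂ (EuclideanSpace ℂ (Fin N)))
    (x : EuclideanSpace ℂ (Fin N)) :
    (‖x‖ ^ 2 : ℝ) = ∑ i, ‖⟪(b i : EuclideanSpace ℂ (Fin N)), x⟫_ℂ‖ ^ 2 := by
  have := b.sum_inner_mul_inner x x
  have h2 : ∀ i, ⟪x, (b i : EuclideanSpace ℂ (Fin N))⟫_ℂ * ⟪(b i : EuclideanSpace ℂ (Fin N)), x⟫_ℂ
      = ((‖⟪(b i : EuclideanSpace ℂ (Fin N)), x⟫_ℂ‖ ^ 2 : ℝ) : ℂ) := by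
    intro i
    rw [← inner_conj_symm x (b i), RCLike.conj_mul]
    norm_cast
  simp_rw [h2] at this
  have h3 : ⟪x, x⟫_ℂ = ((‖x‖^2 : ℝ) : ℂ) := by
    rw [inner_self_eq_norm_sq_to_K]; norm_cast
  rw [h3] at this
  exact_mod_cast this.symm

lemma coercive {N : ℕ} {H0 : Matrix (Fin N) (Fin N) ℂ} (hH0 : H0.PosSemidef)
    {ψ : Fin N → ℂ}
    (hψiff : ∀ v : Fin N → ℂ, H0.mulVec v = 0 ↔ ∃ c : ℂ, v = c • ψ)
    (hμ : ∀ i : Fin N, eigs H0 i ≠ 0 → 1 < eigs H0 i)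
    (v : EuclideanSpace ℂ (Fin N)) (hv : v ≠ 0)
    (hperp : ⟪((WithLp.equiv 2 _).symm ψ : EuclideanSpace ℂ (Fin N)), v⟫_ℂ = 0) :
    ‖v‖ ^ 2 < (⟪v, Matrix.toEuclideanCLM (𝕜 := ℂ) H0 v⟫_ℂ).re := by
  set b0 := hH0.1.eigenvectorBasis with hb0
  set ev := hH0.1.eigenvalues with hev0
  have hev : ∀ i, ev i ≠ 0 → 1 < ev i := by
    intro i hi
    have he : eigs H0 = ev ∘ Tuple.sort ev := by
      rw [eigs, dif_pos hH0.1]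
    have : ev i = eigs H0 ((Tuple.sort ev)⁻¹ i) := by
      rw [he]; simp
    rw [this] at hi ⊢
    exact hμ _ hi
  have hray : (⟪v, Matrix.toEuclideanCLM (𝕜 := ℂ) H0 v⟫_ℂ).re
      = ∑ i, ev i * ‖⟪(b0 i : EuclideanSpace ℂ (Fin N)), v⟫_ℂ‖ ^ 2 := by
    rw [rayleigh_expand hH0.1 v]
    rw [Complex.re_sum]
    simp only [Complex.ofReal_re]
    rfl
  rw [hray, norm_expand b0 v]
  -- key: nonzero coefficient forces eigenvalue > 1
  have hkey : ∀ i : Fin N, ⟪(b0 i : EuclideanSpace ℂ (Fin N)), v⟫_ℂ ≠ 0 → 1 < ev i := by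
    intro i hdi
    apply hev
    intro hzero
    have h1 : Matrix.toEuclideanCLM (𝕜 := ℂ) H0 (b0 i) = 0 := by
      rw [clm_eigen hH0.1 i, ← hev0, ← hb0, hzero]; simp
    have h2 : H0.mulVec (WithLp.equiv 2 _ (b0 i)) = 0 := by
      have := Matrix.ofLp_toEuclideanCLM (𝕜 := ℂ) H0 (b0 i)
      rw [h1] at this
      simpa using this.symm
    obtain ⟨c, hc⟩ := (hψiff _).1 h2
    have h3 : (b0 i : EuclideanSpace ℂ (Fin N)) = c • (WithLp.equiv 2 _).symm ψ := by
      apply (WithLp.equiv 2 _).injective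
      simpa using hc
    apply hdi
    rw [h3, inner_smul_left, hperp, mul_zero]
  have hvnorm : (0:ℝ) < ‖v‖ ^ 2 := pow_pos (norm_pos_iff.2 hv) 2
  have hex : ∃ i : Fin N, ⟪(b0 i : EuclideanSpace ℂ (Fin N)), v⟫_ℂ ≠ 0 := by
    by_contra hall
    push_neg at hall
    have : (‖v‖^2 : ℝ) = 0 := by
      rw [norm_expand b0 v]
      apply Finset.sum_eq_zero
      intro i _
      simp [hall i]
    linarith
  obtain ⟨i0, hi0⟩ := hex
  apply Finset.sum_lt_sum
  · intro i _
    rcases eq_or_ne (⟪(b0 i : EuclideanSpace ℂ (Fin N)), v⟫_ℂ) 0 with h | h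
    · simp [h]
    · nlinarith [hkey i h, sq_nonneg ‖⟪(b0 i : EuclideanSpace ℂ (Fin N)), v⟫_ℂ‖,
        norm_pos_iff.2 h]
  · refine ⟨i0, Finset.mem_univ _, ?_⟩
    have h1 := hkey i0 hi0
    have h2 : (0:ℝ) < ‖⟪(b0 i0 : EuclideanSpace ℂ (Fin N)), v⟫_ℂ‖ ^ 2 :=
      pow_pos (norm_pos_iff.2 hi0) 2
    nlinarith

lemma inner_eigen {N : ℕ} {A : Matrix (Fin N) (Fin N) ℂ} (hA : A.IsHermitian) (i : Fin N) :
    (⟪(hA.eigenvectorBasis i : EuclideanSpace ℂ (Fin N)),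
        Matrix.toEuclideanCLM (𝕜 := ℂ) A (hA.eigenvectorBasis i)⟫_ℂ).re = hA.eigenvalues i := by
  rw [clm_eigen hA i, inner_smul_right]
  have h1 : ⟪(hA.eigenvectorBasis i : EuclideanSpace ℂ (Fin N)), hA.eigenvectorBasis i⟫_ℂ = 1 := by
    have := hA.eigenvectorBasis.orthonormal.1 i
    rw [@inner_self_eq_norm_sq_to_K ℂ]
    simp [this]
  rw [h1]
  simp

lemma re_inner_nonneg {N : ℕ} {A : Matrix (Fin N) (Fin N) ℂ} (hA : A.PosSemidef)
    (x : EuclideanSpace ℂ (Fin N)) :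
    0 ≤ (⟪x, Matrix.toEuclideanCLM (𝕜 := ℂ) A x⟫_ℂ).re := by
  rw [EuclideanSpace.inner_eq_star_dotProduct, Matrix.ofLp_toEuclideanCLM, dotProduct_comm]
  exact (Complex.le_def.1 (hA.dotProduct_mulVec_nonneg x.ofLp)).1

lemma abs_re_inner_le {N : ℕ} (A : Matrix (Fin N) (Fin N) ℂ) (x : EuclideanSpace ℂ (Fin N)) :
    |(⟪x, Matrix.toEuclideanCLM (𝕜 := ℂ) A x⟫_ℂ).re| ≤ opNorm A * ‖x‖ ^ 2 := by
  calc |(⟪x, Matrix.toEuclideanCLM (𝕜 := ℂ) A x⟫_ℂ).re|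
      ≤ ‖⟪x, Matrix.toEuclideanCLM (𝕜 := ℂ) A x⟫_ℂ‖ := Complex.abs_re_le_norm _
    _ ≤ ‖x‖ * ‖Matrix.toEuclideanCLM (𝕜 := ℂ) A x‖ := norm_inner_le_norm _ _
    _ ≤ ‖x‖ * (opNorm A * ‖x‖) := by
        apply mul_le_mul_of_nonneg_left ((Matrix.toEuclideanCLM (𝕜 := ℂ) A).le_opNorm x) (norm_nonneg _)
    _ = opNorm A * ‖x‖ ^ 2 := by ring

set_option maxHeartbeats 1000000 in
theorem unique_eigenvalue_in_low_energy_window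
    (N : ℕ) (hN : 0 < N) (H0 V : Matrix (Fin N) (Fin N) ℂ)
    (hH0 : H0.PosSemidef) (hV : V.IsHermitian)
    (hker : ∃ ψ : Fin N → ℂ, ψ ≠ 0 ∧ ∀ v : Fin N → ℂ,
        H0.mulVec v = 0 ↔ ∃ c : ℂ, v = c • ψ)
    (hμ : ∀ i : Fin N, eigs H0 i ≠ 0 → 1 < eigs H0 i)
    (Δ : ℝ) (hΔ : 0 < Δ) (hVnorm : opNorm V ≤ Δ / 2) :
    ∃! i : Fin N, eigs ((Δ : ℂ) • H0 + V) i ∈ Set.Icc (-(Δ / 2)) (Δ / 2) := by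
  obtain ⟨ψ, hψ0, hψiff⟩ := hker
  have hHH : ((Δ : ℂ) • H0 + V).IsHermitian := by
    refine Matrix.IsHermitian.add ?_ hV
    unfold Matrix.IsHermitian
    rw [Matrix.conjTranspose_smul, hH0.1]
    congr 1
    simp [Complex.ext_iff]
  set H := (Δ : ℂ) • H0 + V with hHdef
  set lam := hHH.eigenvalues with hlam
  set σ := Tuple.sort lam with hσ
  have heigs : eigs H = lam ∘ σ := by rw [eigs, dif_pos hHH]
  have hmono : Monotone (eigs H) := by rw [heigs]; exact Tuple.monotone_sort lam
  -- decomposition of the quadratic form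
  have hTH : ∀ x : EuclideanSpace ℂ (Fin N),
      (⟪x, Matrix.toEuclideanCLM (𝕜 := ℂ) H x⟫_ℂ).re
        = Δ * (⟪x, Matrix.toEuclideanCLM (𝕜 := ℂ) H0 x⟫_ℂ).re
          + (⟪x, Matrix.toEuclideanCLM (𝕜 := ℂ) V x⟫_ℂ).re := by
    intro x
    rw [hHdef, map_add, map_smul, ContinuousLinearMap.add_apply,
      ContinuousLinearMap.smul_apply, inner_add_right, inner_smul_right]
    simp [Complex.add_re, Complex.mul_re]
  have QV : ∀ x : EuclideanSpace ℂ (Fin N),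
      |(⟪x, Matrix.toEuclideanCLM (𝕜 := ℂ) V x⟫_ℂ).re| ≤ Δ / 2 * ‖x‖ ^ 2 := by
    intro x
    refine le_trans (abs_re_inner_le V x) ?_
    exact mul_le_mul_of_nonneg_right hVnorm (sq_nonneg _)
  set ψE : EuclideanSpace ℂ (Fin N) := (WithLp.equiv 2 _).symm ψ with hψE
  have hψE0 : ψE ≠ 0 := by
    intro h
    apply hψ0
    have := congrArg (WithLp.equiv 2 _) h
    simpa [hψE] using this
  -- lower bound on every eigenvalue of H
  have lower : ∀ j : Fin N, -(Δ / 2) ≤ lam j := by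
    intro j
    have h0 := inner_eigen hHH j
    have h1 := hTH (hHH.eigenvectorBasis j)
    have h2 := QV (hHH.eigenvectorBasis j)
    have h3 := re_inner_nonneg hH0 (hHH.eigenvectorBasis j)
    have h4 : ‖(hHH.eigenvectorBasis j : EuclideanSpace ℂ (Fin N))‖ = 1 :=
      hHH.eigenvectorBasis.orthonormal.1 j
    rw [h4] at h2
    rw [← hlam] at h0
    have := abs_le.1 h2
    nlinarith [mul_nonneg (le_of_lt hΔ) h3]
  have hminval : ∀ j : Fin N, eigs H ⟨0, hN⟩ ≤ lam j := by
    intro j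
    have : lam j = eigs H (σ⁻¹ j) := by rw [heigs]; simp
    rw [this]
    exact hmono (by simp [Fin.le_def])
  -- the lowest eigenvalue is at most Δ/2
  have hT0ψ : Matrix.toEuclideanCLM (𝕜 := ℂ) H0 ψE = 0 := by
    have hmv : H0.mulVec ψ = 0 := (hψiff ψ).2 ⟨1, (one_smul _ _).symm⟩
    have key : Matrix.toEuclideanCLM (𝕜 := ℂ) H0 ψE
        = (WithLp.equiv 2 _).symm (H0.mulVec (WithLp.equiv 2 _ ψE)) :=
      rfl
    rw [key]
    have : WithLp.equiv 2 ((Fin N) → ℂ) ψE = ψ := by simp [hψE]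
    rw [this, hmv]
    simp
  have hup : eigs H ⟨0, hN⟩ ≤ Δ / 2 := by
    have h1 := hTH ψE
    rw [hT0ψ] at h1
    simp only [inner_zero_right, Complex.zero_re, mul_zero, zero_add] at h1
    have h2 := QV ψE
    have hray : (⟪ψE, Matrix.toEuclideanCLM (𝕜 := ℂ) H ψE⟫_ℂ).re
        = ∑ i, lam i * ‖⟪(hHH.eigenvectorBasis i : EuclideanSpace ℂ (Fin N)), ψE⟫_ℂ‖ ^ 2 := by
      rw [rayleigh_expand hHH ψE, Complex.re_sum]
      simp only [Complex.ofReal_re]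
      rfl
    have hlow : eigs H ⟨0, hN⟩ * ‖ψE‖ ^ 2
        ≤ (⟪ψE, Matrix.toEuclideanCLM (𝕜 := ℂ) H ψE⟫_ℂ).re := by
      rw [hray, norm_expand hHH.eigenvectorBasis ψE, Finset.mul_sum]
      apply Finset.sum_le_sum
      intro i _
      exact mul_le_mul_of_nonneg_right (hminval i) (sq_nonneg _)
    have hpos : (0:ℝ) < ‖ψE‖ ^ 2 := pow_pos (norm_pos_iff.2 hψE0) 2
    have := abs_le.1 h2
    nlinarith
  have hlow0 : -(Δ / 2) ≤ eigs H ⟨0, hN⟩ := by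
    have : eigs H ⟨0, hN⟩ = lam (σ ⟨0, hN⟩) := by rw [heigs]; rfl
    rw [this]; exact lower _
  -- the key coercivity bound
  have key : ∀ v : EuclideanSpace ℂ (Fin N), v ≠ 0 → ⟪ψE, v⟫_ℂ = 0 →
      Δ / 2 * ‖v‖ ^ 2 < (⟪v, Matrix.toEuclideanCLM (𝕜 := ℂ) H v⟫_ℂ).re := by
    intro v hv hperp
    have h1 := coercive hH0 hψiff hμ v hv hperp
    have h2 := abs_le.1 (QV v)
    have h3 := hTH v
    nlinarith [mul_lt_mul_of_pos_left h1 hΔ]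
  refine ⟨⟨0, hN⟩, ⟨hlow0, hup⟩, ?_⟩
  intro j hj
  by_contra hne
  have hj1 : 1 ≤ j.val := by
    rcases Nat.eq_zero_or_pos j.val with h | h
    · exact absurd (Fin.ext h) hne
    · exact h
  have h1N : 1 < N := lt_of_le_of_lt hj1 j.isLt
  -- second eigenvalue exceeds Δ/2
  have claim : Δ / 2 < eigs H ⟨1, h1N⟩ := by
    set a := σ ⟨0, hN⟩ with ha
    set bb := σ ⟨1, h1N⟩ with hbb
    have heigs0 : eigs H ⟨0, hN⟩ = lam a := by rw [heigs]; rfl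
    have heigs1 : eigs H ⟨1, h1N⟩ = lam bb := by rw [heigs]; rfl
    have h01 : eigs H ⟨0, hN⟩ ≤ eigs H ⟨1, h1N⟩ := hmono (by simp [Fin.le_def])
    set b := hHH.eigenvectorBasis with hb
    have orth : ∀ i j : Fin N, ⟪(b i : EuclideanSpace ℂ (Fin N)), b j⟫_ℂ
        = if i = j then 1 else 0 := orthonormal_iff_ite.1 b.orthonormal
    have hab : a ≠ bb := by
      intro h
      have := σ.injective h
      simp [Fin.ext_iff] at this
    -- construct v ⊥ ψ in span {b a, b bb}
    obtain ⟨v, hv0, hvperp, hvbound⟩ : ∃ v : EuclideanSpace ℂ (Fin N), v ≠ 0 ∧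
        ⟪ψE, v⟫_ℂ = 0 ∧
        (⟪v, Matrix.toEuclideanCLM (𝕜 := ℂ) H v⟫_ℂ).re ≤ eigs H ⟨1, h1N⟩ * ‖v‖ ^ 2 := by
      rcases eq_or_ne (⟪ψE, (b a : EuclideanSpace ℂ (Fin N))⟫_ℂ) 0 with hca | hca
      · refine ⟨b a, ?_, hca, ?_⟩
        · intro h
          have := b.orthonormal.1 a
          rw [h] at this; simp at this
        · have h1 : (⟪(b a : EuclideanSpace ℂ (Fin N)),
              Matrix.toEuclideanCLM (𝕜 := ℂ) H (b a)⟫_ℂ).re = lam a := inner_eigen hHH a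
          rw [h1, b.orthonormal.1 a]
          rw [← heigs0]
          nlinarith
      · set c : ℂ := ⟪ψE, (b bb : EuclideanSpace ℂ (Fin N))⟫_ℂ
            / ⟪ψE, (b a : EuclideanSpace ℂ (Fin N))⟫_ℂ with hc
        have hvnorm : ‖(b bb - c • b a : EuclideanSpace ℂ (Fin N))‖ ^ 2 = 1 + ‖c‖ ^ 2 := by
          rw [@norm_sub_sq ℂ, inner_smul_right, orth, if_neg hab.symm, norm_smul,
            b.orthonormal.1 a, b.orthonormal.1 bb]
          simp
        refine ⟨b bb - c • b a, ?_, ?_, ?_⟩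
        · intro h
          rw [h] at hvnorm
          simp only [norm_zero] at hvnorm
          nlinarith [sq_nonneg ‖c‖]
        · rw [inner_sub_right, inner_smul_right, hc,
            div_mul_cancel₀ _ hca, sub_self]
        · have hTv : Matrix.toEuclideanCLM (𝕜 := ℂ) H (b bb - c • b a)
              = (lam bb : ℂ) • b bb - (c * (lam a : ℂ)) • b a := by
            rw [map_sub, ContinuousLinearMap.map_smul, clm_eigen hHH, clm_eigen hHH, smul_smul]
          have hinner : (⟪(b bb - c • b a : EuclideanSpace ℂ (Fin N)),
              Matrix.toEuclideanCLM (𝕜 := ℂ) H (b bb - c • b a)⟫_ℂ).re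
              = lam bb + lam a * ‖c‖ ^ 2 := by
            rw [hTv]
            simp only [inner_sub_left, inner_sub_right, inner_smul_left, inner_smul_right, orth,
              if_pos rfl, if_neg hab, if_neg hab.symm]
            simp only [if_true, mul_zero, mul_one, sub_zero, zero_sub, mul_neg,
              sub_neg_eq_add]
            have hcc : c * (↑(lam a) : ℂ) * (starRingEnd ℂ) c
                = (↑(lam a) : ℂ) * ((‖c‖ ^ 2 : ℝ) : ℂ) := by
              rw [mul_comm c, mul_assoc, Complex.mul_conj, Complex.normSq_eq_norm_sq]
            rw [hcc, ← Complex.ofReal_mul, ← Complex.ofReal_add]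
            exact Complex.ofReal_re _
          rw [hinner, hvnorm, ← heigs1]
          have h0a : lam a ≤ lam bb := by rw [← heigs0, ← heigs1]; exact h01
          rw [heigs1]
          nlinarith [sq_nonneg ‖c‖]
    have hbig := key v hv0 hvperp
    have hpos : (0:ℝ) < ‖v‖ ^ 2 := pow_pos (norm_pos_iff.2 hv0) 2
    nlinarith
  have hj2 : eigs H ⟨1, h1N⟩ ≤ eigs H j := hmono (by simp [Fin.le_def, hj1])
  have := hj.2
  simp only [Set.mem_Icc] at hj
  linarith [hj.2]
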